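/- Fix ε > 0 and C > 0. For each K with C·σ_K < 1/2, let S^{(K)} be the random walk with step-up probability p_K = 1/2 + C·σ_K, set m_K = ⌈(ε/2)·σ_K·K⌉, and let i ≥ 1 be an integer. Then lim_{K→∞} e^{K^α} · P_{i·m_K}[ τ_{(i−1)·m_K} < τ_{(i+1)·m_K} ] = 0. -/

import Mathlib

open MeasureTheory ProbabilityTheory Filter Set

/-- The simple random walk started at `j` with increments `ξ`. -/
noncomputable def walk {Ω : Type*} (j : ℤ) (ξ : ℕ → Ω → ℤ) (n : ℕ) (ω : Ω) : ℤ :=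
  j + ∑ i ∈ Finset.range n, ξ i ω

/-- The hitting time `τ_m = inf {n ≥ 0 : S_n = m}` (with `inf ∅ = ∞`) of the level `m`
by the walk started at `j` with increments `ξ`. -/
noncomputable def hitTime {Ω : Type*} (j : ℤ) (ξ : ℕ → Ω → ℤ) (m : ℤ) (ω : Ω) : ℕ∞ :=
  ⨅ (n : ℕ) (_ : walk j ξ n ω = m), (n : ℕ∞)

section Aux
variable {Ω' : Type*} [MeasurableSpace Ω'] (P : Measure Ω') [IsProbabilityMeasure P]


lemma ae_pm (X : Ω' → ℤ) (hX : Measurable X) (p : ℝ) (hp0 : 0 ≤ p) (hp1 : p ≤ 1)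
    (h1 : P {ω | X ω = 1} = ENNReal.ofReal p)
    (h2 : P {ω | X ω = -1} = ENNReal.ofReal (1 - p)) :
    ∀ᵐ ω ∂P, X ω = 1 ∨ X ω = -1 := by
  have hs1 : MeasurableSet {ω | X ω = 1} := hX (measurableSet_singleton 1)
  have hs2 : MeasurableSet {ω | X ω = -1} := hX (measurableSet_singleton (-1))
  have hdisj : Disjoint {ω | X ω = 1} {ω | X ω = -1} := by
    rw [Set.disjoint_left]; rintro ω h1' h2'; simp only [Set.mem_setOf_eq] at *; omega
  have hu : P ({ω | X ω = 1} ∪ {ω | X ω = -1}) = 1 := by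
    rw [measure_union hdisj hs2, h1, h2, ← ENNReal.ofReal_add hp0 (by linarith)]
    norm_num
  have : P ({ω | X ω = 1} ∪ {ω | X ω = -1})ᶜ = 0 := by
    rw [measure_compl (hs1.union hs2) (measure_ne_top _ _), hu, measure_univ, tsub_self]
  filter_upwards [measure_eq_zero_iff_ae_notMem.mp this] with ω hω
  simpa [Set.mem_union, Set.mem_setOf_eq] using not_not.mp hω

lemma mgf_step (X : Ω' → ℤ) (hX : Measurable X) (p : ℝ) (hp0 : 0 ≤ p) (hp1 : p ≤ 1)
    (h1 : P {ω | X ω = 1} = ENNReal.ofReal p)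
    (h2 : P {ω | X ω = -1} = ENNReal.ofReal (1 - p)) (t : ℝ) :
    mgf (fun ω => (X ω : ℝ)) P t = p * Real.exp t + (1 - p) * Real.exp (-t) := by
  have hs1 : MeasurableSet {ω | X ω = 1} := hX (measurableSet_singleton 1)
  have hs2 : MeasurableSet {ω | X ω = -1} := hX (measurableSet_singleton (-1))
  have hae := ae_pm P X hX p hp0 hp1 h1 h2
  have hcongr : (fun ω => Real.exp (t * (X ω : ℝ)))
      =ᵐ[P] fun ω => ({ω | X ω = 1}.indicator (fun _ => Real.exp t) ω
        + {ω | X ω = -1}.indicator (fun _ => Real.exp (-t)) ω) := by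
    filter_upwards [hae] with ω hω
    rcases hω with h | h <;>
      simp [Set.indicator_apply, Set.mem_setOf_eq, h, mul_comm]
  rw [mgf, integral_congr_ae hcongr, integral_add
      ((integrable_indicator_iff hs1).2 (integrableOn_const (measure_ne_top _ _)))
      ((integrable_indicator_iff hs2).2 (integrableOn_const (measure_ne_top _ _))),
    integral_indicator_const _ hs1, integral_indicator_const _ hs2, measureReal_def, measureReal_def, h1, h2,
    ENNReal.toReal_ofReal hp0, ENNReal.toReal_ofReal (by linarith)]
  simp [smul_eq_mul]
  try ring

lemma chernoff_bound (ξ : ℕ → Ω' → ℤ) (hmeas : ∀ n, Measurable (ξ n))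
    (hindep : iIndepFun ξ P)
    (p : ℝ) (hp0 : 0 ≤ p) (hp1 : p ≤ 1)
    (h1 : ∀ n, P {ω | ξ n ω = 1} = ENNReal.ofReal p)
    (h2 : ∀ n, P {ω | ξ n ω = -1} = ENNReal.ofReal (1 - p))
    (θ : ℝ) (hθ : 0 ≤ θ) (M : ℕ) (lam : ℝ) (hlam0 : 0 ≤ lam) (hlam1 : lam < 1)
    (hlam : p * Real.exp (-θ) + (1 - p) * Real.exp θ ≤ lam) :
    P {ω | ∃ n : ℕ, (∑ k ∈ Finset.range n, ξ k ω) = -(M : ℤ)}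
      ≤ ENNReal.ofReal (Real.exp (-(θ * M)) * (1 - lam)⁻¹) := by
  set Y : ℕ → Ω' → ℝ := fun k ω => ((ξ k ω : ℤ) : ℝ) with hY
  have hYmeas : ∀ k, Measurable (Y k) := fun k =>
    Measurable.comp (measurable_from_top) (hmeas k)
  have hYindep : iIndepFun Y P :=
    hindep.comp (fun _ => (Int.cast : ℤ → ℝ)) (fun _ => measurable_from_top)
  -- a.e., all steps are ±1
  have haeall : ∀ᵐ ω ∂P, ∀ k, ξ k ω = 1 ∨ ξ k ω = -1 := by
    rw [ae_all_iff]
    exact fun k => ae_pm P (ξ k) (hmeas k) p hp0 hp1 (h1 k) (h2 k)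
  -- per-n bound
  have key : ∀ n : ℕ, P {ω | Y 0 ω + 0 = 0} = 1 → True := fun _ _ => trivial
  have hbound : ∀ n : ℕ,
      P {ω | ((∑ k ∈ Finset.range n, ξ k ω : ℤ) : ℝ) ≤ -(M : ℝ)}
        ≤ ENNReal.ofReal (Real.exp (-(θ * M)) * lam ^ n) := by
    intro n
    set X : Ω' → ℝ := ∑ k ∈ Finset.range n, Y k with hX
    have hXfun : X = fun ω => ∑ k ∈ Finset.range n, Y k ω := by
      ext ω; rw [hX, Finset.sum_apply]
    have hXmeas : Measurable X := by
      rw [hXfun]; exact Finset.measurable_sum _ fun k _ => hYmeas k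
    have hXeq : ∀ ω, X ω = ((∑ k ∈ Finset.range n, ξ k ω : ℤ) : ℝ) := by
      intro ω; rw [hX, Finset.sum_apply]; push_cast [hY]; rfl
    have hint : Integrable (fun ω => Real.exp (-θ * X ω)) P := by
      refine Integrable.mono' (integrable_const (Real.exp (θ * n)))
        ((hXmeas.const_mul _).exp.aestronglyMeasurable) ?_
      filter_upwards [haeall] with ω hω
      rw [Real.norm_eq_abs, abs_of_pos (Real.exp_pos _), Real.exp_le_exp]
      have hXb : |X ω| ≤ (n : ℝ) := by
        rw [hX, Finset.sum_apply]
        refine (Finset.abs_sum_le_sum_abs _ _).trans ?_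
        have : ∀ k ∈ Finset.range n, |Y k ω| ≤ 1 := by
          intro k _; rcases hω k with h | h <;> simp [hY, h]
        calc ∑ k ∈ Finset.range n, |Y k ω| ≤ ∑ _k ∈ Finset.range n, (1 : ℝ) :=
              Finset.sum_le_sum this
          _ = n := by simp
      nlinarith [abs_le.mp hXb, Real.exp_pos θ]
    have hchern := measure_le_le_exp_mul_mgf (μ := P) (X := X) (-(M : ℝ))
      (neg_nonpos.mpr hθ) hint
    have hmgf : mgf X P (-θ) ≤ lam ^ n := by
      rw [hX, hYindep.mgf_sum hYmeas]
      have hone : ∀ k ∈ Finset.range n, mgf (Y k) P (-θ) = p * Real.exp (-θ) + (1 - p) * Real.exp θ := by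
        intro k _
        have := mgf_step P (ξ k) (hmeas k) p hp0 hp1 (h1 k) (h2 k) (-θ)
        simpa [hY, neg_neg] using this
      rw [Finset.prod_congr rfl hone, Finset.prod_const, Finset.card_range]
      exact pow_le_pow_left₀ (add_nonneg (mul_nonneg hp0 (Real.exp_pos _).le)
        (mul_nonneg (by linarith) (Real.exp_pos _).le)) hlam n
    have hseteq : {ω | ((∑ k ∈ Finset.range n, ξ k ω : ℤ) : ℝ) ≤ -(M : ℝ)}
        = {ω | X ω ≤ -(M : ℝ)} := by
      ext ω; rw [Set.mem_setOf_eq, Set.mem_setOf_eq, hXeq]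
    have hfin : P {ω | X ω ≤ -(M : ℝ)} ≠ ⊤ := measure_ne_top _ _
    rw [hseteq, ENNReal.le_ofReal_iff_toReal_le hfin
      (mul_nonneg (Real.exp_pos _).le (pow_nonneg hlam0 n))]
    calc (P {ω | X ω ≤ -(M : ℝ)}).toReal
        ≤ Real.exp (-(-θ) * (-(M : ℝ))) * mgf X P (-θ) := hchern
      _ ≤ Real.exp (-(θ * M)) * lam ^ n := by
          rw [show -(-θ) * (-(M : ℝ)) = -(θ * M) by ring]
          exact mul_le_mul_of_nonneg_left hmgf (Real.exp_pos _).le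
  have hsub : {ω | ∃ n : ℕ, (∑ k ∈ Finset.range n, ξ k ω) = -(M : ℤ)}
      ⊆ ⋃ n : ℕ, {ω | ((∑ k ∈ Finset.range n, ξ k ω : ℤ) : ℝ) ≤ -(M : ℝ)} := by
    rintro ω ⟨n, hn⟩
    refine Set.mem_iUnion.2 ⟨n, ?_⟩
    rw [Set.mem_setOf_eq, hn]
    push_cast
    exact le_refl _
  calc P {ω | ∃ n : ℕ, (∑ k ∈ Finset.range n, ξ k ω) = -(M : ℤ)}
      ≤ P (⋃ n : ℕ, {ω | ((∑ k ∈ Finset.range n, ξ k ω : ℤ) : ℝ) ≤ -(M : ℝ)}) :=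
        measure_mono hsub
    _ ≤ ∑' n : ℕ, P {ω | ((∑ k ∈ Finset.range n, ξ k ω : ℤ) : ℝ) ≤ -(M : ℝ)} :=
        measure_iUnion_le _
    _ ≤ ∑' n : ℕ, ENNReal.ofReal (Real.exp (-(θ * M)) * lam ^ n) :=
        ENNReal.tsum_le_tsum hbound
    _ = ENNReal.ofReal (∑' n : ℕ, Real.exp (-(θ * M)) * lam ^ n) :=
        (ENNReal.ofReal_tsum_of_nonneg
          (fun n => mul_nonneg (Real.exp_pos _).le (pow_nonneg hlam0 n))
          ((summable_geometric_of_lt_one hlam0 hlam1).mul_left _)).symm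
    _ = ENNReal.ofReal (Real.exp (-(θ * M)) * (1 - lam)⁻¹) := by
        rw [tsum_mul_left, tsum_geometric_of_lt_one hlam0 hlam1]

lemma lam_le (δ : ℝ) (h0 : 0 < δ) (h1 : δ < 1/2) :
    (1/2 + δ) * Real.exp (-δ) + (1 - (1/2 + δ)) * Real.exp δ ≤ 1 - δ^2 := by
  have ha : Real.exp (-δ) * (1 + δ) ≤ 1 := by
    have := Real.add_one_le_exp δ
    calc Real.exp (-δ) * (1 + δ) ≤ Real.exp (-δ) * Real.exp δ := by
          exact mul_le_mul_of_nonneg_left (by linarith) (Real.exp_pos _).le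
      _ = 1 := by rw [← Real.exp_add]; simp
  have hb : Real.exp δ * (1 - δ) ≤ 1 := by
    have := Real.add_one_le_exp (-δ)
    calc Real.exp δ * (1 - δ) ≤ Real.exp δ * Real.exp (-δ) := by
          exact mul_le_mul_of_nonneg_left (by linarith) (Real.exp_pos _).le
      _ = 1 := by rw [← Real.exp_add]; simp
  have H : ((1/2 + δ) * Real.exp (-δ) + (1 - (1/2 + δ)) * Real.exp δ) * (1 - δ^2)
      ≤ 1 - 2*δ^2 := by
    nlinarith [mul_le_mul_of_nonneg_left ha (show (0:ℝ) ≤ (1/2 + δ) * (1 - δ) by nlinarith),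
      mul_le_mul_of_nonneg_left hb (show (0:ℝ) ≤ (1/2 - δ) * (1 + δ) by nlinarith)]
  have hpos : (0:ℝ) < 1 - δ^2 := by nlinarith
  nlinarith [H, hpos, sq_nonneg (δ^2)]

end Aux

set_option maxHeartbeats 1000000 in
/-- Fix `α ∈ (0,1/2)` and a sequence `σ_K > 0` with `σ_K → 0` and `K^{1/2−α}·σ_K → ∞`.
Fix `ε > 0` and `C > 0`.  For each `K` with `C·σ_K < 1/2`, let `S^{(K)}` be the random
walk with i.i.d. `±1` steps with step-up probability `p_K = 1/2 + C·σ_K`, set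
`m_K = ⌈(ε/2)·σ_K·K⌉`, and let `i ≥ 1` be an integer.  Then
`lim_{K→∞} e^{K^α} · P_{i·m_K}[ τ_{(i−1)·m_K} < τ_{(i+1)·m_K} ] = 0`. -/
theorem stmt7 (α : ℝ) (hα : α ∈ Set.Ioo (0 : ℝ) (1 / 2))
    (σ : ℕ → ℝ) (hσpos : ∀ K, 0 < σ K)
    (hσ0 : Tendsto σ atTop (nhds 0))
    (hσK : Tendsto (fun K : ℕ => (K : ℝ) ^ ((1 : ℝ) / 2 - α) * σ K) atTop atTop)
    (ε C : ℝ) (hε : 0 < ε) (hC : 0 < C)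
    (i : ℕ) (hi : 1 ≤ i)
    (Ω : ℕ → Type*) (mΩ : ∀ K, MeasurableSpace (Ω K))
    (P : ∀ K, Measure (Ω K)) (hP : ∀ K, IsProbabilityMeasure (P K))
    (ξ : ∀ K, ℕ → Ω K → ℤ) (hmeas : ∀ K n, Measurable (ξ K n))
    (hindep : ∀ K, C * σ K < 1 / 2 → iIndepFun (ξ K) (P K))
    (hup : ∀ K, C * σ K < 1 / 2 → ∀ n,
      P K {ω | ξ K n ω = 1} = ENNReal.ofReal (1 / 2 + C * σ K))
    (hdown : ∀ K, C * σ K < 1 / 2 → ∀ n,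
      P K {ω | ξ K n ω = -1} = ENNReal.ofReal (1 - (1 / 2 + C * σ K))) :
    Tendsto (fun K : ℕ =>
      Real.exp ((K : ℝ) ^ α) *
        (P K {ω | hitTime ((i : ℤ) * (⌈(ε / 2) * σ K * (K : ℝ)⌉₊ : ℤ)) (ξ K)
              (((i : ℤ) - 1) * (⌈(ε / 2) * σ K * (K : ℝ)⌉₊ : ℤ)) ω
            < hitTime ((i : ℤ) * (⌈(ε / 2) * σ K * (K : ℝ)⌉₊ : ℤ)) (ξ K)
                (((i : ℤ) + 1) * (⌈(ε / 2) * σ K * (K : ℝ)⌉₊ : ℤ)) ω}).toReal)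
      atTop (nhds 0) := by
  obtain ⟨hα0, hα2⟩ := hα
  -- the dominating sequence
  set h : ℕ → ℝ := fun K => (1 / C ^ 2) * ((K : ℝ) * Real.exp (-(K : ℝ) ^ (2 * α))) with hh
  have hh0 : Tendsto h atTop (nhds 0) := by
    have hbase : Tendsto (fun K : ℕ => (K : ℝ) ^ (2 * α)) atTop atTop :=
      (tendsto_rpow_atTop (by positivity)).comp tendsto_natCast_atTop_atTop
    have hF : Tendsto (fun x : ℝ => x ^ (1 / (2 * α)) * Real.exp (-1 * x)) atTop (nhds 0) :=
      tendsto_rpow_mul_exp_neg_mul_atTop_nhds_zero _ 1 one_pos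
    have hcomp := hF.comp hbase
    have heq : (fun K : ℕ => ((K : ℝ) ^ (2 * α)) ^ (1 / (2 * α)) *
        Real.exp (-1 * (K : ℝ) ^ (2 * α)))
        =ᶠ[atTop] fun K : ℕ => (K : ℝ) * Real.exp (-(K : ℝ) ^ (2 * α)) := by
      filter_upwards [eventually_ge_atTop 1] with K hK
      have hKpos : (0 : ℝ) ≤ (K : ℝ) := Nat.cast_nonneg K
      rw [← Real.rpow_mul hKpos, mul_one_div_cancel (by positivity : (2 : ℝ) * α ≠ 0),
        Real.rpow_one, neg_one_mul]
    have := (Tendsto.congr' heq hcomp)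
    have := this.const_mul (1 / C ^ 2)
    simpa [hh] using this
  refine tendsto_of_tendsto_of_tendsto_of_le_of_le' tendsto_const_nhds hh0 ?_ ?_
  · exact Eventually.of_forall fun K =>
      mul_nonneg (Real.exp_pos _).le ENNReal.toReal_nonneg
  · -- eventual bound
    have hE1 : ∀ᶠ K : ℕ in atTop, σ K < 1 / (2 * C) :=
      hσ0.eventually_lt_const (by positivity)
    have hT1 : ∀ᶠ K : ℕ in atTop, 1 ≤ (K : ℝ) ^ ((1 : ℝ) / 2 - α) * σ K :=
      hσK.eventually_ge_atTop 1
    have hT2 : ∀ᶠ K : ℕ in atTop, Real.sqrt (4 / (C * ε)) ≤ (K : ℝ) ^ ((1 : ℝ) / 2 - α) * σ K :=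
      hσK.eventually_ge_atTop _
    filter_upwards [hE1, hT1, hT2, eventually_ge_atTop 1] with K hσlt hT1 hT2 hK1
    have hK1R : (1 : ℝ) ≤ (K : ℝ) := by exact_mod_cast hK1
    have hKpos : (0 : ℝ) < (K : ℝ) := by linarith
    set T : ℝ := (K : ℝ) ^ ((1 : ℝ) / 2 - α) * σ K with hT
    set δ : ℝ := C * σ K with hδdef
    have hδpos : 0 < δ := mul_pos hC (hσpos K)
    have hδhalf : δ < 1 / 2 := by
      rw [hδdef]
      calc C * σ K < C * (1 / (2 * C)) := by
            exact mul_lt_mul_of_pos_left hσlt hC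
        _ = 1 / 2 := by field_simp
    haveI := hP K
    set M : ℕ := ⌈(ε / 2) * σ K * (K : ℝ)⌉₊ with hM
    clear_value T δ M
    -- T squared bound
    have hT2' : 2 ≤ (C * ε / 2) * T ^ 2 := by
      have h4 : (0 : ℝ) ≤ 4 / (C * ε) := by positivity
      have : 4 / (C * ε) ≤ T ^ 2 := by
        have := Real.sq_sqrt h4
        nlinarith [Real.sqrt_nonneg (4 / (C * ε)), hT2]
      calc (2 : ℝ) = (C * ε / 2) * (4 / (C * ε)) := by field_simp; ring
        _ ≤ (C * ε / 2) * T ^ 2 := by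
            exact mul_le_mul_of_nonneg_left this (by positivity)
    -- key identity σ² K = T² K^{2α}
    have hid : σ K ^ 2 * (K : ℝ) = T ^ 2 * (K : ℝ) ^ (2 * α) := by
      rw [hT, mul_pow, ← Real.rpow_natCast ((K : ℝ) ^ ((1:ℝ)/2 - α)) 2,
        ← Real.rpow_mul hKpos.le]
      rw [show ((1:ℝ)/2 - α) * (2 : ℕ) = 1 - 2 * α by push_cast; ring]
      have hKsplit : (K : ℝ) ^ (1 - 2*α) * (K : ℝ) ^ (2*α) = (K : ℝ) := by
        rw [← Real.rpow_add hKpos]; norm_num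
      calc σ K ^ 2 * (K : ℝ) = σ K ^ 2 * ((K : ℝ) ^ (1 - 2*α) * (K : ℝ) ^ (2*α)) := by
            rw [hKsplit]
        _ = (K : ℝ) ^ (1 - 2*α) * σ K ^ 2 * (K : ℝ) ^ (2*α) := by ring
    -- the chernoff bound
    have hchern := chernoff_bound (P K) (ξ K) (hmeas K) (hindep K (by linarith [hδhalf]))
      (1/2 + δ) (by linarith) (by linarith)
      (by simpa [hδdef] using hup K (by linarith [hδhalf]))
      (by simpa [hδdef] using hdown K (by linarith [hδhalf]))
      δ hδpos.le M (1 - δ^2) (by nlinarith) (by nlinarith)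
      (lam_le δ hδpos hδhalf)
    -- event inclusion
    have hsub : {ω | hitTime ((i : ℤ) * (M : ℤ)) (ξ K)
              (((i : ℤ) - 1) * (M : ℤ)) ω
            < hitTime ((i : ℤ) * (M : ℤ)) (ξ K)
                (((i : ℤ) + 1) * (M : ℤ)) ω}
          ⊆ {ω | ∃ n : ℕ, (∑ k ∈ Finset.range n, ξ K k ω) = -(M : ℤ)} := by
      intro ω hω
      simp only [Set.mem_setOf_eq] at hω ⊢
      by_contra hcon
      push_neg at hcon
      have hwalk : ∀ n : ℕ, walk ((i : ℤ) * (M : ℤ)) (ξ K) n ω ≠ ((i : ℤ) - 1) * (M : ℤ) := by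
        intro n hn
        refine hcon n ?_
        have : (i : ℤ) * (M : ℤ) + ∑ k ∈ Finset.range n, ξ K k ω = ((i : ℤ) - 1) * (M : ℤ) := hn
        linarith [this]
      have htop : hitTime ((i : ℤ) * (M : ℤ)) (ξ K) (((i : ℤ) - 1) * (M : ℤ)) ω = ⊤ := by
        rw [hitTime, iInf_eq_top]
        intro n
        rw [iInf_eq_top]
        exact fun hw => absurd hw (hwalk n)
      rw [htop] at hω
      exact not_top_lt hω
    have hPle : P K {ω | hitTime ((i : ℤ) * (M : ℤ)) (ξ K)
              (((i : ℤ) - 1) * (M : ℤ)) ω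
            < hitTime ((i : ℤ) * (M : ℤ)) (ξ K)
                (((i : ℤ) + 1) * (M : ℤ)) ω}
          ≤ ENNReal.ofReal (Real.exp (-(δ * M)) * (δ ^ 2)⁻¹) := by
      refine (measure_mono hsub).trans (hchern.trans_eq ?_)
      congr 2
      ring
    -- pass to toReal
    have hBnn : 0 ≤ Real.exp (-(δ * M)) * (δ ^ 2)⁻¹ := by positivity
    have htoReal : (P K {ω | hitTime ((i : ℤ) * (M : ℤ)) (ξ K)
              (((i : ℤ) - 1) * (M : ℤ)) ω
            < hitTime ((i : ℤ) * (M : ℤ)) (ξ K)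
                (((i : ℤ) + 1) * (M : ℤ)) ω}).toReal
          ≤ Real.exp (-(δ * M)) * (δ ^ 2)⁻¹ := by
      refine le_trans (ENNReal.toReal_mono ENNReal.ofReal_ne_top hPle) ?_
      rw [ENNReal.toReal_ofReal hBnn]
    -- numeric estimates
    have hMge : (ε / 2) * σ K * (K : ℝ) ≤ (M : ℝ) := hM ▸ Nat.le_ceil _
    have hδM : 2 * (K : ℝ) ^ (2 * α) ≤ δ * M := by
      have h1 : (C * ε / 2) * (σ K ^ 2 * (K : ℝ)) ≤ δ * M := by
        rw [hδdef]
        calc (C * ε / 2) * (σ K ^ 2 * (K : ℝ))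
            = (C * σ K) * ((ε / 2) * σ K * (K : ℝ)) := by ring
          _ ≤ (C * σ K) * (M : ℝ) := by
              exact mul_le_mul_of_nonneg_left hMge (mul_pos hC (hσpos K)).le
      rw [hid] at h1
      have h2 : 2 * (K : ℝ) ^ (2 * α) ≤ (C * ε / 2) * (T ^ 2 * (K : ℝ) ^ (2 * α)) := by
        have hKα : (0 : ℝ) ≤ (K : ℝ) ^ (2 * α) := Real.rpow_nonneg hKpos.le _
        nlinarith [hT2', hKα]
      linarith
    have hαle : (K : ℝ) ^ α ≤ (K : ℝ) ^ (2 * α) :=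
      Real.rpow_le_rpow_of_exponent_le hK1R (by linarith)
    have hexp : Real.exp ((K : ℝ) ^ α) * Real.exp (-(δ * M)) ≤
        Real.exp (-(K : ℝ) ^ (2 * α)) := by
      rw [← Real.exp_add, Real.exp_le_exp]
      linarith
    have hδinv : (δ ^ 2)⁻¹ ≤ (K : ℝ) / C ^ 2 := by
      have hσ2 : (1 : ℝ) / (K : ℝ) ≤ σ K ^ 2 := by
        have hT1sq : 1 ≤ T ^ 2 := by nlinarith [hT1]
        have : (K : ℝ) ^ (2 * α) ≤ T ^ 2 * (K : ℝ) ^ (2 * α) := by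
          nlinarith [Real.rpow_nonneg hKpos.le (2 * α)]
        rw [← hid] at this
        have hK2α : (1 : ℝ) ≤ (K : ℝ) ^ (2 * α) := Real.one_le_rpow hK1R (by positivity)
        have : 1 ≤ σ K ^ 2 * (K : ℝ) := le_trans hK2α this
        rw [div_le_iff₀ hKpos]
        linarith
      have hδ2 : C ^ 2 / (K : ℝ) ≤ δ ^ 2 := by
        rw [hδdef, mul_pow]
        calc C ^ 2 / (K : ℝ) = C ^ 2 * (1 / (K : ℝ)) := by ring
          _ ≤ C ^ 2 * σ K ^ 2 := by
              exact mul_le_mul_of_nonneg_left hσ2 (by positivity)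
      rw [show (K : ℝ) / C ^ 2 = (C ^ 2 / (K : ℝ))⁻¹ by field_simp]
      exact inv_anti₀ (by positivity) hδ2
    -- assemble
    calc Real.exp ((K : ℝ) ^ α) * (P K {ω | hitTime ((i : ℤ) * (M : ℤ)) (ξ K)
              (((i : ℤ) - 1) * (M : ℤ)) ω
            < hitTime ((i : ℤ) * (M : ℤ)) (ξ K)
                (((i : ℤ) + 1) * (M : ℤ)) ω}).toReal
        ≤ Real.exp ((K : ℝ) ^ α) * (Real.exp (-(δ * M)) * (δ ^ 2)⁻¹) :=
          mul_le_mul_of_nonneg_left htoReal (Real.exp_pos _).le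
      _ = (Real.exp ((K : ℝ) ^ α) * Real.exp (-(δ * M))) * (δ ^ 2)⁻¹ := by ring
      _ ≤ Real.exp (-(K : ℝ) ^ (2 * α)) * ((K : ℝ) / C ^ 2) := by
          exact mul_le_mul hexp hδinv (by positivity) (Real.exp_pos _).le
      _ = h K := by rw [hh]; ring
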